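/- Let f : X → Y be a continuous function between subspaces X, Y of the Cantor set such that f maps every discrete subset of X to a resolvable subset of Y. Then f is piecewise open. -/

import Mathlib

open Set Topology

abbrev Cantor : Type := ℕ → Bool

def Resolvable {T : Type*} [TopologicalSpace T] (E : Set T) : Prop :=
  ∀ F : Set T, IsClosed F → F.Nonempty → closure (F ∩ E) ∩ closure (F \ E) ≠ F

def OpenOntoImage {X Y : Type*} [TopologicalSpace X] [TopologicalSpace Y]
    (f : X → Y) (S : Set X) : Prop :=
  ∀ U : Set X, IsOpen U → ∃ V : Set Y, IsOpen V ∧ f '' (U ∩ S) = V ∩ f '' S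

/-- `D` is a discrete subset: every point of `D` is isolated in `D`. -/
def IsDiscreteSubset {X : Type*} [TopologicalSpace X] (D : Set X) : Prop :=
  ∀ x ∈ D, ∃ U : Set X, IsOpen U ∧ U ∩ D = {x}

section Prelim

variable {α β : Type*} [TopologicalSpace α] [TopologicalSpace β] {f : α → β}

lemma openOntoImage_empty (f : α → β) : OpenOntoImage f (∅ : Set α) := by
  intro U _
  exact ⟨∅, isOpen_empty, by simp⟩

lemma OpenOntoImage.inter_open {S : Set α} (hS : OpenOntoImage f S) {G : Set α}
    (hG : IsOpen G) : OpenOntoImage f (S ∩ G) := by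
  intro U hU
  obtain ⟨V, hV, hVeq⟩ := hS (U ∩ G) (hU.inter hG)
  refine ⟨V, hV, ?_⟩
  apply Set.Subset.antisymm
  · rintro y ⟨x, ⟨hxU, hxS, hxG⟩, rfl⟩
    constructor
    · have : f x ∈ f '' (U ∩ G ∩ S) := ⟨x, ⟨⟨hxU, hxG⟩, hxS⟩, rfl⟩
      rw [hVeq] at this; exact this.1
    · exact ⟨x, ⟨hxS, hxG⟩, rfl⟩
  · intro y hy
    obtain ⟨hyV, x, ⟨hxS, hxG⟩, rfl⟩ := hy
    have : f x ∈ V ∩ f '' S := ⟨hyV, ⟨x, hxS, rfl⟩⟩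
    rw [← hVeq] at this
    obtain ⟨x', ⟨⟨hx'U, hx'G⟩, hx'S⟩, hfx'⟩ := this
    exact ⟨x', ⟨hx'U, hx'S, hx'G⟩, hfx'⟩

/-- From failure of relative openness, extract a "bad point". -/
lemma exists_bad_point {S : Set α} (h : ¬ OpenOntoImage f S) :
    ∃ U : Set α, IsOpen U ∧ ∃ x, x ∈ U ∩ S ∧
      f x ∈ closure (f '' S \ f '' (U ∩ S)) := by
  simp only [OpenOntoImage, not_forall] at h
  obtain ⟨U, hU, hne⟩ := h
  refine ⟨U, hU, ?_⟩
  by_contra hcon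
  push_neg at hcon
  apply hne
  have hV : ∀ x ∈ U ∩ S, ∃ V : Set β, IsOpen V ∧ f x ∈ V ∧
      V ∩ (f '' S \ f '' (U ∩ S)) = ∅ := by
    intro x hx
    have := hcon x hx
    rw [mem_closure_iff] at this
    push_neg at this
    obtain ⟨V, hVo, hfxV, hemp⟩ := this
    exact ⟨V, hVo, hfxV, hemp⟩
  choose V hVo hfxV hVemp using hV
  refine ⟨⋃ (x : α) (hx : x ∈ U ∩ S), V x hx, isOpen_iUnion fun x => isOpen_iUnion fun hx => hVo x hx, ?_⟩
  apply Set.Subset.antisymm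
  · rintro y ⟨x, hx, rfl⟩
    exact ⟨mem_iUnion.mpr ⟨x, mem_iUnion.mpr ⟨hx, hfxV x hx⟩⟩, ⟨x, hx.2, rfl⟩⟩
  · rintro y ⟨hyV, hyS⟩
    obtain ⟨x, hx⟩ := mem_iUnion.mp hyV
    obtain ⟨hxUS, hyVx⟩ := mem_iUnion.mp hx
    by_contra hyn
    have : y ∈ V x hxUS ∩ (f '' S \ f '' (U ∩ S)) := ⟨hyVx, hyS, hyn⟩
    rw [hVemp x hxUS] at this
    exact this

end Prelim

section Derivative

variable {α β : Type*} [TopologicalSpace α] [TopologicalSpace β]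

/-- The derivative: remove all points covered by a good basic set. -/
def dstar (f : α → β) (bX : ℕ → Set α) (A : Set α) : Set α :=
  A \ ⋃ n ∈ {n | OpenOntoImage f (A ∩ bX n)}, bX n

lemma dstar_subset (f : α → β) (bX : ℕ → Set α) (A : Set α) : dstar f bX A ⊆ A :=
  diff_subset

lemma dstar_isClosed (f : α → β) {bX : ℕ → Set α} (hb : ∀ n, IsOpen (bX n))
    {A : Set α} (hA : IsClosed A) : IsClosed (dstar f bX A) := by
  have : IsOpen (⋃ n ∈ {n | OpenOntoImage f (A ∩ bX n)}, bX n) :=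
    isOpen_biUnion fun n _ => hb n
  exact hA.sdiff this

lemma dstar_inter_good (f : α → β) (bX : ℕ → Set α) (A : Set α) {n : ℕ}
    (hn : OpenOntoImage f (A ∩ bX n)) : dstar f bX A ∩ bX n = ∅ := by
  apply eq_empty_iff_forall_notMem.mpr
  rintro x ⟨⟨_, hx2⟩, hxB⟩
  exact hx2 (mem_biUnion hn hxB)

noncomputable def Aseq (f : α → β) (bX : ℕ → Set α) : Ordinal.{0} → Set α :=
  fun o => ⋂ o' : Set.Iio o, dstar f bX (Aseq f bX o'.1)
termination_by o => o
decreasing_by exact o'.2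

lemma Aseq_def (f : α → β) (bX : ℕ → Set α) (o : Ordinal.{0}) :
    Aseq f bX o = ⋂ o' : Set.Iio o, dstar f bX (Aseq f bX o'.1) := by
  rw [Aseq]

lemma Aseq_antitone (f : α → β) (bX : ℕ → Set α) {o o' : Ordinal.{0}} (h : o ≤ o') :
    Aseq f bX o' ⊆ Aseq f bX o := by
  rw [Aseq_def f bX o', Aseq_def f bX o]
  intro x hx
  simp only [mem_iInter] at hx ⊢
  intro i
  exact hx ⟨i.1, show (i.1 : Ordinal) < o' from lt_of_lt_of_le i.2 h⟩

lemma Aseq_succ (f : α → β) (bX : ℕ → Set α) (o : Ordinal.{0}) :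
    Aseq f bX (o + 1) = dstar f bX (Aseq f bX o) := by
  apply Set.Subset.antisymm
  · rw [Aseq_def f bX (o + 1)]
    intro x hx
    simp only [mem_iInter] at hx
    exact hx ⟨o, show o < o + 1 by rw [Ordinal.add_one_eq_succ]; exact Order.lt_succ o⟩
  · intro x hx
    rw [Aseq_def f bX (o + 1)]
    simp only [mem_iInter]
    rintro ⟨i, hi⟩
    have hi' : i < o + 1 := hi
    rw [Ordinal.add_one_eq_succ] at hi'
    rcases lt_or_eq_of_le (Order.lt_succ_iff.mp hi') with h | h
    · have hx' : x ∈ Aseq f bX o := dstar_subset f bX _ hx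
      rw [Aseq_def f bX o] at hx'
      simp only [mem_iInter] at hx'
      exact hx' ⟨i, h⟩
    · simp only [h]; exact hx

lemma Aseq_isClosed (f : α → β) {bX : ℕ → Set α} (hb : ∀ n, IsOpen (bX n))
    (o : Ordinal.{0}) : IsClosed (Aseq f bX o) := by
  induction o using Ordinal.induction with
  | _ o ih =>
    rw [Aseq_def]
    exact isClosed_iInter fun i => dstar_isClosed f hb (ih i.1 i.2)

lemma Aseq_zero (f : α → β) (bX : ℕ → Set α) : Aseq f bX 0 = univ := by
  rw [Aseq_def]
  apply eq_univ_iff_forall.mpr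
  intro x
  simp only [mem_iInter]
  rintro ⟨i, hi⟩
  exact absurd hi (by simp)

end Derivative

section Partition

variable {α β : Type*} [TopologicalSpace α] [TopologicalSpace β]

lemma tag_of_strict (f : α → β) (bX : ℕ → Set α) {A : Set α}
    (h : dstar f bX A ≠ A) :
    ∃ n, OpenOntoImage f (A ∩ bX n) ∧ (A ∩ bX n).Nonempty := by
  have hne : (A \ dstar f bX A).Nonempty := by
    rw [Set.diff_nonempty]
    intro hsub
    exact h (Set.Subset.antisymm (dstar_subset f bX A) hsub)
  obtain ⟨x, hxA, hxd⟩ := hne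
  have : x ∈ ⋃ n ∈ {n | OpenOntoImage f (A ∩ bX n)}, bX n := by
    by_contra hxn
    exact hxd ⟨hxA, hxn⟩
  obtain ⟨n, hn, hxB⟩ := mem_iUnion₂.mp this
  exact ⟨n, hn, ⟨x, hxA, hxB⟩⟩

lemma partition_of_kernel_empty (bX : ℕ → Set α) (hb : ∀ n, IsClopen (bX n)) (f : α → β)
    (hkey : ∀ A : Set α, IsClosed A → A.Nonempty →
      (∀ n, (A ∩ bX n).Nonempty → ¬ OpenOntoImage f (A ∩ bX n)) → False) :
    ∃ C : ℕ → Set α, (∀ n, IsClosed (C n)) ∧ Pairwise (Function.onFun Disjoint C) ∧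
      (⋃ n, C n) = univ ∧ ∀ n, OpenOntoImage f (C n) := by
  classical
  have hbo : ∀ n, IsOpen (bX n) := fun n => (hb n).2
  have hbc : ∀ n, IsClosed (bX n) := fun n => (hb n).1
  set A : Ordinal.{0} → Set α := Aseq f bX with hAdef
  -- an injectivity principle for tags
  have tag_inj : ∀ (g : Ordinal.{0} → ℕ),
      (∀ o o', o < o' → OpenOntoImage f (A o ∩ bX (g o)) → (A o' ∩ bX (g o')).Nonempty →
        g o ≠ g o') := by
    intro g o o' hlt hopen hne hEq
    have hsub : A o' ⊆ dstar f bX (A o) := by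
      rw [← Aseq_succ]
      apply Aseq_antitone
      rw [Ordinal.add_one_eq_succ]
      exact Order.succ_le_of_lt hlt
    have hdis : dstar f bX (A o) ∩ bX (g o) = ∅ := dstar_inter_good f bX (A o) hopen
    obtain ⟨x, hx1, hx2⟩ := hne
    rw [← hEq] at hx2
    exact Set.eq_empty_iff_forall_notMem.mp hdis x ⟨hsub hx1, hx2⟩
  -- existence of a fixed point
  have hfix_ex : ∃ o : Ordinal.{0}, dstar f bX (A o) = A o := by
    by_contra hno
    push_neg at hno
    have tag : ∀ o : Ordinal.{0}, ∃ n, OpenOntoImage f (A o ∩ bX n) ∧ (A o ∩ bX n).Nonempty :=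
      fun o => tag_of_strict f bX (hno o)
    choose tg htg1 htg2 using tag
    set Ω : Ordinal.{0} := (Cardinal.aleph 1).ord with hΩ
    have hinj : Function.Injective (fun o : Set.Iio Ω => tg o.1) := by
      intro a b hab
      by_contra hne
      have hne' : a.1 ≠ b.1 := fun h => hne (Subtype.ext h)
      rcases hne'.lt_or_gt with h | h
      · exact tag_inj tg a.1 b.1 h (htg1 a.1) (htg2 b.1) hab
      · exact tag_inj tg b.1 a.1 h (htg1 b.1) (htg2 a.1) hab.symm
    haveI : Countable (Set.Iio Ω) := ⟨⟨_, hinj⟩⟩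
    have hle : Cardinal.mk (Set.Iio Ω) ≤ Cardinal.aleph0 := Cardinal.mk_le_aleph0
    rw [Ordinal.mk_Iio_ordinal, Cardinal.card_ord] at hle
    have h2 : Cardinal.lift.{1,0} (Cardinal.aleph 1) ≤ Cardinal.lift.{1,0} Cardinal.aleph0 := by
      rw [Cardinal.lift_aleph0]
      exact hle
    have : Cardinal.aleph 1 ≤ Cardinal.aleph0 := Cardinal.lift_le.mp h2
    exact absurd this (not_le.mpr Cardinal.aleph0_lt_aleph_one)
  set γ : Ordinal.{0} := Ordinal.lt_wf.min {o | dstar f bX (A o) = A o} hfix_ex with hγdef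
  have hγ : dstar f bX (A γ) = A γ := Ordinal.lt_wf.min_mem _ hfix_ex
  have hγleast : ∀ o, o < γ → dstar f bX (A o) ≠ A o := by
    intro o ho hfx
    exact Ordinal.lt_wf.not_lt_min _ hfx ho
  -- the kernel is empty
  have hempty : A γ = ∅ := by
    by_contra hne
    apply hkey (A γ) (Aseq_isClosed f hbo γ) (nonempty_iff_ne_empty.mpr hne)
    intro n hn hopen
    have h0 := dstar_inter_good f bX (A γ) hopen
    rw [hγ] at h0
    exact hn.ne_empty h0
  -- Iio γ is countable
  have tagl : ∀ o : Set.Iio γ, ∃ n, OpenOntoImage f (A o.1 ∩ bX n) ∧ (A o.1 ∩ bX n).Nonempty :=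
    fun o => tag_of_strict f bX (hγleast o.1 o.2)
  choose tg htg1 htg2 using tagl
  set tg' : Ordinal.{0} → ℕ := fun o => if h : o < γ then tg ⟨o, h⟩ else 0 with htg'def
  have htg'eq : ∀ o : Set.Iio γ, tg' o.1 = tg o := by
    rintro ⟨o, ho⟩
    exact dif_pos ho
  have tginj : Function.Injective tg := by
    intro a b hab
    by_contra hne
    have hne' : a.1 ≠ b.1 := fun h => hne (Subtype.ext h)
    rcases hne'.lt_or_gt with h | h
    · exact tag_inj tg' a.1 b.1 h (by rw [htg'eq a]; exact htg1 a) (by rw [htg'eq b]; exact htg2 b) (by rw [htg'eq a, htg'eq b]; exact hab)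
    · exact tag_inj tg' b.1 a.1 h (by rw [htg'eq b]; exact htg1 b) (by rw [htg'eq a]; exact htg2 a) (by rw [htg'eq b, htg'eq a]; exact hab.symm)
  haveI hcnt : Countable (Set.Iio γ) := ⟨⟨_, tginj⟩⟩
  -- the pieces
  set Pc : Set.Iio γ × ℕ → Set α := fun p =>
    if OpenOntoImage f (A p.1.1 ∩ bX p.2) then
      A p.1.1 ∩ bX p.2 ∩ ⋂ m : Fin p.2,
        (if OpenOntoImage f (A p.1.1 ∩ bX m.1) then (bX m.1)ᶜ else univ)
    else ∅ with hPcdef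
  have Pc_closed : ∀ p, IsClosed (Pc p) := by
    intro p
    by_cases h : OpenOntoImage f (A p.1.1 ∩ bX p.2)
    · rw [hPcdef]
      simp only [if_pos h]
      refine (((Aseq_isClosed f hbo p.1.1).inter (hbc p.2)).inter (isClosed_iInter ?_))
      intro m
      by_cases hm : OpenOntoImage f (A p.1.1 ∩ bX m.1)
      · simp only [if_pos hm]; exact (hbo m.1).isClosed_compl
      · simp only [if_neg hm]; exact isClosed_univ
    · rw [hPcdef]; simp only [if_neg h]; exact isClosed_empty
  have Pc_open : ∀ p, OpenOntoImage f (Pc p) := by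
    intro p
    by_cases h : OpenOntoImage f (A p.1.1 ∩ bX p.2)
    · rw [hPcdef]
      simp only [if_pos h]
      refine h.inter_open (isOpen_iInter_of_finite ?_)
      intro m
      by_cases hm : OpenOntoImage f (A p.1.1 ∩ bX m.1)
      · simp only [if_pos hm]; exact (hbc m.1).isOpen_compl
      · simp only [if_neg hm]; exact isOpen_univ
    · rw [hPcdef]; simp only [if_neg h]; exact openOntoImage_empty f
  -- pieces at different ordinal levels
  have lvl_disj : ∀ (o o' : Set.Iio γ) (n n' : ℕ), o.1 < o'.1 →
      Disjoint (Pc (o, n)) (Pc (o', n')) := by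
    intro o o' n n' hlt
    by_cases h : OpenOntoImage f (A o.1 ∩ bX n)
    swap
    · rw [hPcdef]; simp only [if_neg h]; exact disjoint_bot_left
    rw [Set.disjoint_left]
    intro x hx1 hx2
    have hxB : x ∈ bX n := by
      rw [hPcdef] at hx1
      simp only [if_pos h] at hx1
      exact hx1.1.2
    have hxA : x ∈ A o'.1 := by
      rw [hPcdef] at hx2
      by_cases h' : OpenOntoImage f (A o'.1 ∩ bX n')
      · simp only [if_pos h'] at hx2; exact hx2.1.1
      · simp only [if_neg h'] at hx2; exact absurd hx2 (notMem_empty x)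
    have hsub : A o'.1 ⊆ dstar f bX (A o.1) := by
      rw [← Aseq_succ]
      apply Aseq_antitone
      rw [Ordinal.add_one_eq_succ]
      exact Order.succ_le_of_lt hlt
    have hdis := dstar_inter_good f bX (A o.1) h
    exact eq_empty_iff_forall_notMem.mp hdis x ⟨hsub hxA, hxB⟩
  have Pc_disj : ∀ p q, p ≠ q → Disjoint (Pc p) (Pc q) := by
    intro p q hpq
    rcases p with ⟨o, n⟩
    rcases q with ⟨o', n'⟩
    rcases lt_trichotomy o.1 o'.1 with h | h | h
    · exact lvl_disj o o' n n' h
    · have ho : o = o' := Subtype.ext h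
      subst ho
      have hnn : n ≠ n' := by
        intro hh; exact hpq (by rw [hh])
      -- same level, different basic sets
      have key : ∀ (m m' : ℕ), m < m' → Disjoint (Pc (o, m)) (Pc (o, m')) := by
        intro m m' hmm
        by_cases h1 : OpenOntoImage f (A o.1 ∩ bX m)
        swap
        · rw [hPcdef]; simp only [if_neg h1]; exact disjoint_bot_left
        by_cases h2 : OpenOntoImage f (A o.1 ∩ bX m')
        swap
        · rw [hPcdef]; simp only [if_neg h2]; exact disjoint_bot_right
        rw [Set.disjoint_left]
        intro x hx1 hx2
        have hxB : x ∈ bX m := by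
          rw [hPcdef] at hx1; simp only [if_pos h1] at hx1; exact hx1.1.2
        have hxC : x ∈ (bX m)ᶜ := by
          rw [hPcdef] at hx2; simp only [if_pos h2] at hx2
          have := mem_iInter.mp hx2.2 ⟨m, hmm⟩
          simpa only [if_pos h1] using this
        exact hxC hxB
      rcases hnn.lt_or_gt with hh | hh
      · exact key n n' hh
      · exact (key n' n hh).symm
    · exact (lvl_disj o' o n' n h).symm
  -- coverage
  have Pc_cover : ∀ x : α, ∃ p, x ∈ Pc p := by
    intro x
    have hxγ : x ∉ A γ := by rw [hempty]; exact notMem_empty x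
    set s : Set Ordinal.{0} := {o | x ∉ A o} with hsdef
    have hs : s.Nonempty := ⟨γ, hxγ⟩
    set i := Ordinal.lt_wf.min s hs with hidef
    have hi : x ∉ A i := Ordinal.lt_wf.min_mem s hs
    have hmin : ∀ o, o < i → x ∈ A o := by
      intro o ho
      by_contra hxo
      exact Ordinal.lt_wf.not_lt_min s hxo ho
    have hiγ : i ≤ γ := Ordinal.lt_wf.min_le hxγ
    -- find j < i with x ∈ A j \ dstar (A j)
    have : ∃ j, j < i ∧ x ∉ dstar f bX (A j) := by
      rw [hAdef, Aseq_def] at hi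
      simp only [mem_iInter, not_forall] at hi
      obtain ⟨⟨j, hj⟩, hjx⟩ := hi
      exact ⟨j, hj, hjx⟩
    obtain ⟨j, hji, hjd⟩ := this
    have hjA : x ∈ A j := hmin j hji
    have hjγ : j < γ := lt_of_lt_of_le hji hiγ
    have hxU : x ∈ ⋃ n ∈ {n | OpenOntoImage f (A j ∩ bX n)}, bX n := by
      by_contra hxn
      exact hjd ⟨hjA, hxn⟩
    obtain ⟨n0, hn0, hxB0⟩ := mem_iUnion₂.mp hxU
    -- least such n
    set t : Set ℕ := {n | OpenOntoImage f (A j ∩ bX n) ∧ x ∈ bX n} with htdef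
    have hts : t.Nonempty := ⟨n0, hn0, hxB0⟩
    set n := Nat.lt_wfRel.wf.min t hts with hndef
    have hnt : n ∈ t := Nat.lt_wfRel.wf.min_mem t hts
    have hnmin : ∀ m, m < n → m ∉ t := by
      intro m hm hmt
      exact Nat.lt_wfRel.wf.not_lt_min t hmt hm
    refine ⟨(⟨j, hjγ⟩, n), ?_⟩
    rw [hPcdef]
    simp only [if_pos hnt.1]
    refine ⟨⟨hjA, hnt.2⟩, ?_⟩
    apply mem_iInter.mpr
    rintro ⟨m, hm⟩
    by_cases hmo : OpenOntoImage f (A j ∩ bX m)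
    · simp only [if_pos hmo]
      intro hxm
      exact hnmin m hm ⟨hmo, hxm⟩
    · simp only [if_neg hmo]; exact mem_univ x
  -- assemble the countable family
  obtain ⟨enc, henc⟩ := Countable.exists_injective_nat (Set.Iio γ × ℕ)
  refine ⟨fun m => if h : ∃ p, enc p = m then Pc h.choose else ∅, ?_, ?_, ?_, ?_⟩
  · intro m
    by_cases h : ∃ p, enc p = m
    · simp only [dif_pos h]; exact Pc_closed _
    · simp only [dif_neg h]; exact isClosed_empty
  · intro m m' hmm
    by_cases h : ∃ p, enc p = m
    swap
    · simp only [Function.onFun, dif_neg h]; exact disjoint_bot_left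
    by_cases h' : ∃ p, enc p = m'
    swap
    · simp only [Function.onFun, dif_neg h']; exact disjoint_bot_right
    simp only [Function.onFun, dif_pos h, dif_pos h']
    apply Pc_disj
    intro hcontra
    apply hmm
    rw [← h.choose_spec, ← h'.choose_spec, hcontra]
  · apply eq_univ_iff_forall.mpr
    intro x
    obtain ⟨p, hp⟩ := Pc_cover x
    apply mem_iUnion.mpr
    refine ⟨enc p, ?_⟩
    have hex : ∃ q, enc q = enc p := ⟨p, rfl⟩
    simp only [dif_pos hex]
    have : hex.choose = p := henc hex.choose_spec
    rw [this]
    exact hp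
  · intro m
    by_cases h : ∃ p, enc p = m
    · simp only [dif_pos h]; exact Pc_open _
    · simp only [dif_neg h]; exact openOntoImage_empty f

end Partition


section Basis

noncomputable def cylL (l : List Bool) : Set Cantor :=
  PiNat.cylinder (fun i => l.getD i false) l.length

lemma isClopen_cylL (l : List Bool) : IsClopen (cylL l) := by
  constructor
  · rw [cylL, PiNat.cylinder_eq_pi]
    exact isClosed_set_pi fun i _ => isClosed_singleton
  · exact PiNat.isOpen_cylinder _ _ _

lemma cantor_subtype_basis (Z : Set Cantor) :
    ∃ b : ℕ → Set Z, (∀ n, IsClopen (b n)) ∧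
      ∀ (O : Set Z) (x : Z), IsOpen O → x ∈ O → ∃ n, x ∈ b n ∧ b n ⊆ O := by
  obtain ⟨e, he⟩ := exists_surjective_nat (List Bool)
  refine ⟨fun n => Subtype.val ⁻¹' cylL (e n),
    fun n => (isClopen_cylL (e n)).preimage continuous_subtype_val, ?_⟩
  intro O x hO hxO
  obtain ⟨O', hO', rfl⟩ := isOpen_induced_iff.mp hO
  have hx' : (x : Cantor) ∈ O' := hxO
  obtain ⟨v, ⟨y, N, rfl⟩, hxv, hvO⟩ :=
    (PiNat.isTopologicalBasis_cylinders (fun _ : ℕ => Bool)).exists_subset_of_mem_open hx' hO'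
  obtain ⟨n, hn⟩ := he (List.ofFn (fun i : Fin N => (x : Cantor) i))
  have hcyl : cylL (e n) = PiNat.cylinder (y : Cantor) N := by
    rw [hn]
    ext z
    simp only [cylL, PiNat.mem_cylinder_iff, List.length_ofFn]
    constructor
    · intro h i hi
      have := h i hi
      rw [List.getD_eq_getElem _ _ (by simpa using hi), List.getElem_ofFn] at this
      rw [this]
      exact (hxv i hi).symm ▸ rfl
    · intro h i hi
      rw [List.getD_eq_getElem _ _ (by simpa using hi), List.getElem_ofFn]
      rw [h i hi]
      exact (hxv i hi).symm
  refine ⟨n, ?_, ?_⟩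
  · show (x : Cantor) ∈ cylL (e n)
    rw [hcyl]; exact hxv
  · intro z hz
    have : (z : Cantor) ∈ cylL (e n) := hz
    rw [hcyl] at this
    exact hvO this

end Basis


section Construction

/-- Scheduling: parent of node `j`. -/
def KLpar (j : ℕ) : ℕ := min (Nat.unpair (j - 1)).1 (j - 1)

/-- Scheduling: precision index of node `j`. -/
def KLkk (j : ℕ) : ℕ := (Nat.unpair (Nat.unpair (j - 1)).2).1

/-- Scheduling: color of node `j`. -/
def KLcc (j : ℕ) : Bool := decide ((Nat.unpair (Nat.unpair (j - 1)).2).2 % 2 = 1)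

lemma KLpar_lt {j : ℕ} (h : 1 ≤ j) : KLpar j < j :=
  lt_of_le_of_lt (min_le_right _ _) (Nat.sub_lt h one_pos)

lemma KLsched_surj (i k : ℕ) (c : Bool) :
    ∃ j, 1 ≤ j ∧ KLpar j = i ∧ KLkk j = k ∧ KLcc j = c := by
  refine ⟨Nat.pair i (Nat.pair k (cond c 1 0)) + 1, le_add_self, ?_, ?_, ?_⟩
  · simp only [KLpar, Nat.add_sub_cancel, Nat.unpair_pair]
    exact min_eq_left (Nat.left_le_pair _ _)
  · simp [KLkk, Nat.add_sub_cancel, Nat.unpair_pair]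
  · cases c <;> simp [KLcc, Nat.add_sub_cancel, Nat.unpair_pair]

/-- Node data for the tree construction. -/
structure KLNode (α : Type*) where
  pt : α
  Bt : Set α
  W0 : Set α
  col : Bool

variable {α β : Type*} [TopologicalSpace α] [MetricSpace β]

/-- The current "forbidden zone" of node `i` at stage `n`. -/
def KLW (v : ℕ → KLNode α) (n i : ℕ) : Set α :=
  (v i).W0 ∪ ⋃ j ∈ {j : ℕ | j ≤ n ∧ 1 ≤ j ∧ KLpar j = i}, (v j).Bt

lemma KLW_sub0 (v : ℕ → KLNode α) (n i : ℕ) : (v i).W0 ⊆ KLW v n i :=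
  subset_union_left

lemma KLW_clopen (v : ℕ → KLNode α) (n i : ℕ) (h0 : IsClopen (v i).W0)
    (hB : ∀ j ≤ n, IsClopen (v j).Bt) : IsClopen (KLW v n i) := by
  have hfin : {j : ℕ | j ≤ n ∧ 1 ≤ j ∧ KLpar j = i}.Finite :=
    (Set.finite_Iic n).subset fun j hj => hj.1
  constructor
  · exact h0.1.union (hfin.isClosed_biUnion fun j hj => (hB j hj.1).1)
  · exact h0.2.union (isOpen_biUnion fun j hj => (hB j hj.1).2)

/-- `KLW` at the fresh node is just its `W0`. -/
lemma KLW_new (v : ℕ → KLNode α) (n : ℕ) : KLW v (n + 1) (n + 1) = (v (n + 1)).W0 := by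
  rw [KLW]
  have : {j : ℕ | j ≤ n + 1 ∧ 1 ≤ j ∧ KLpar j = n + 1} = ∅ := by
    apply eq_empty_iff_forall_notMem.mpr
    rintro j ⟨hj1, hj2, hj3⟩
    have := KLpar_lt hj2
    omega
  rw [this]
  simp

/-- How `KLW` evolves when adding a new node. -/
lemma KLW_update (v : ℕ → KLNode α) (n : ℕ) (nd : KLNode α) {i : ℕ} (hi : i ≤ n) :
    KLW (Function.update v (n + 1) nd) (n + 1) i =
      if KLpar (n + 1) = i then KLW v n i ∪ nd.Bt else KLW v n i := by
  have hW0 : (Function.update v (n + 1) nd i).W0 = (v i).W0 := by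
    rw [Function.update_of_ne (by omega)]
  have hBt : ∀ j ≤ n, (Function.update v (n + 1) nd j).Bt = (v j).Bt := by
    intro j hj
    rw [Function.update_of_ne (by omega)]
  by_cases hpar : KLpar (n + 1) = i
  · rw [if_pos hpar]
    apply Set.Subset.antisymm
    · rintro x hx
      rcases hx with hx | hx
      · rw [hW0] at hx
        exact Or.inl (Or.inl hx)
      · obtain ⟨j, ⟨hj1, hj2, hj3⟩, hxj⟩ := mem_iUnion₂.mp hx
        rcases Nat.lt_or_ge j (n + 1) with hjn | hjn
        · left; right
          apply mem_iUnion₂.mpr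
          refine ⟨j, ⟨by omega, hj2, hj3⟩, ?_⟩
          rwa [hBt j (by omega)] at hxj
        · have : j = n + 1 := by omega
          subst this
          rw [Function.update_self] at hxj
          exact Or.inr hxj
    · rintro x (hx | hx)
      · rcases hx with hx | hx
        · exact Or.inl (by rwa [hW0])
        · obtain ⟨j, ⟨hj1, hj2, hj3⟩, hxj⟩ := mem_iUnion₂.mp hx
          right
          apply mem_iUnion₂.mpr
          refine ⟨j, ⟨by omega, hj2, hj3⟩, ?_⟩
          rwa [hBt j hj1]
      · right
        apply mem_iUnion₂.mpr
        refine ⟨n + 1, ⟨le_refl _, by omega, hpar⟩, ?_⟩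
        rwa [Function.update_self]
  · rw [if_neg hpar]
    apply Set.Subset.antisymm
    · rintro x hx
      rcases hx with hx | hx
      · rw [hW0] at hx
        exact Or.inl hx
      · obtain ⟨j, ⟨hj1, hj2, hj3⟩, hxj⟩ := mem_iUnion₂.mp hx
        have hjn : j ≤ n := by
          rcases Nat.lt_or_ge j (n + 1) with h | h
          · omega
          · exfalso; apply hpar; rw [← hj3]; congr 1; omega
        right
        apply mem_iUnion₂.mpr
        refine ⟨j, ⟨hjn, hj2, hj3⟩, ?_⟩
        rwa [hBt j hjn] at hxj
    · rintro x (hx | hx)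
      · exact Or.inl (by rwa [hW0])
      · obtain ⟨j, ⟨hj1, hj2, hj3⟩, hxj⟩ := mem_iUnion₂.mp hx
        right
        apply mem_iUnion₂.mpr
        refine ⟨j, ⟨by omega, hj2, hj3⟩, ?_⟩
        rwa [hBt j hj1]

variable (f : α → β) (A : Set α)

/-- Invariants of the construction after stage `n` (nodes `0,…,n` built). -/
structure KLInv (n : ℕ) (v : ℕ → KLNode α) : Prop where
  hxA : ∀ i ≤ n, (v i).pt ∈ A
  hxW : ∀ i ≤ n, (v i).pt ∈ (v i).W0
  hW0sub : ∀ i ≤ n, (v i).W0 ⊆ (v i).Bt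
  hBtclopen : ∀ i ≤ n, IsClopen (v i).Bt
  hW0clopen : ∀ i ≤ n, IsClopen (v i).W0
  hclosure : ∀ i ≤ n, f (v i).pt ∈ closure (f '' (A ∩ (v i).Bt) \ f '' (A ∩ KLW v n i))
  hinj : ∀ i ≤ n, ∀ j ≤ n, i ≠ j → f (v i).pt ≠ f (v j).pt
  hA4 : ∀ i, ∀ j ≤ n, i < j → (v j).Bt ∩ (v i).W0 = ∅
  hA5 : ∀ i, ∀ j ≤ n, i < j → (v j).Bt ∩ (v i).Bt = ∅ ∨ (v j).Bt ⊆ KLW v n i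
  hA8 : ∀ i ≤ n, ∀ j ≤ n, i ≠ j → (v j).pt ∉ (v i).W0
  hdist : ∀ j, 1 ≤ j → j ≤ n →
    dist (f (v j).pt) (f (v (KLpar j)).pt) < (1/2 : ℝ) ^ (KLkk j)
  hcol : ∀ j, 1 ≤ j → j ≤ n → (v j).col = KLcc j

end Construction

section Construction2

set_option linter.unusedSectionVars false

variable {α β : Type*} [TopologicalSpace α] [MetricSpace β]
variable (f : α → β) (A : Set α) (bX : ℕ → Set α)

/-- Seed a new node inside a given open set meeting `A`. -/
lemma KLseed (hbc : ∀ n, IsClopen (bX n))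
    (hbb : ∀ (O : Set α) (x : α), IsOpen O → x ∈ O → ∃ n, x ∈ bX n ∧ bX n ⊆ O)
    (hfix : ∀ n, (A ∩ bX n).Nonempty → ¬ OpenOntoImage f (A ∩ bX n))
    {O : Set α} (hO : IsOpen O) {x0 : α} (hx0 : x0 ∈ A) (hx0O : x0 ∈ O) :
    ∃ (x : α) (m : ℕ) (W0 : Set α), bX m ⊆ O ∧ IsClopen W0 ∧ W0 ⊆ bX m ∧
      x ∈ A ∧ x ∈ W0 ∧ f x ∈ closure (f '' (A ∩ bX m) \ f '' (A ∩ W0)) := by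
  obtain ⟨m₁, hxB, hBO⟩ := hbb O x0 hO hx0O
  have hne : (A ∩ bX m₁).Nonempty := ⟨x0, hx0, hxB⟩
  obtain ⟨U, hU, xb, hxbU, hxbcl⟩ := exists_bad_point (hfix m₁ hne)
  obtain ⟨m₂, hxbm₂, hm₂U⟩ := hbb U xb hU hxbU.1
  refine ⟨xb, m₁, bX m₁ ∩ bX m₂, hBO, (hbc m₁).inter (hbc m₂), inter_subset_left,
    hxbU.2.1, ⟨hxbU.2.2, hxbm₂⟩, ?_⟩
  apply closure_mono ?_ hxbcl
  intro z hz
  refine ⟨hz.1, fun hmem => hz.2 ?_⟩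
  obtain ⟨w, ⟨hwA, hw1, hw2⟩, hfw⟩ := hmem
  exact ⟨w, ⟨hm₂U hw2, hwA, hw1⟩, hfw⟩

lemma KLzero (v : ℕ → KLNode α) (i : ℕ) : KLW v 0 i = (v i).W0 := by
  rw [KLW]
  have : {j : ℕ | j ≤ 0 ∧ 1 ≤ j ∧ KLpar j = i} = ∅ := by
    apply eq_empty_iff_forall_notMem.mpr
    rintro j ⟨hj1, hj2, _⟩
    omega
  rw [this]
  simp

/-- The root of the construction. -/
lemma KLroot (hbc : ∀ n, IsClopen (bX n))
    (hbb : ∀ (O : Set α) (x : α), IsOpen O → x ∈ O → ∃ n, x ∈ bX n ∧ bX n ⊆ O)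
    (hfix : ∀ n, (A ∩ bX n).Nonempty → ¬ OpenOntoImage f (A ∩ bX n))
    (hA : A.Nonempty) :
    ∃ v : ℕ → KLNode α, KLInv f A 0 v := by
  obtain ⟨x0, hx0⟩ := hA
  obtain ⟨x, m, W0, _, hWcl, hWB, hxA, hxW, hcl⟩ :=
    KLseed f A bX hbc hbb hfix isOpen_univ hx0 (mem_univ x0)
  set v : ℕ → KLNode α := fun _ => ⟨x, bX m, W0, false⟩ with hv
  have h0 : ∀ i, i ≤ 0 → i = 0 := fun i hi => Nat.le_zero.mp hi
  refine ⟨v, ?_, ?_, ?_, ?_, ?_, ?_, ?_, ?_, ?_, ?_, ?_, ?_⟩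
  · intro i _; exact hxA
  · intro i _; exact hxW
  · intro i _; exact hWB
  · intro i _; exact hbc m
  · intro i _; exact hWcl
  · intro i _; rw [KLzero]; exact hcl
  · intro i hi j hj hij; exact absurd ((h0 i hi).trans (h0 j hj).symm) hij
  · intro i j hj hij; omega
  · intro i j hj hij; omega
  · intro i hi j hj hij; exact absurd ((h0 i hi).trans (h0 j hj).symm) hij
  · intro j hj1 hj0; omega
  · intro j hj1 hj0; omega

end Construction2

section Construction3

set_option linter.unusedSectionVars false
set_option maxHeartbeats 1000000

variable {α β : Type*} [TopologicalSpace α] [MetricSpace β]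
variable (f : α → β) (A : Set α) (bX : ℕ → Set α)

/-- The inductive step of the construction. -/
lemma KLstep (hf : Continuous f) (hbc : ∀ n, IsClopen (bX n))
    (hbb : ∀ (O : Set α) (x : α), IsOpen O → x ∈ O → ∃ n, x ∈ bX n ∧ bX n ⊆ O)
    (hfix : ∀ n, (A ∩ bX n).Nonempty → ¬ OpenOntoImage f (A ∩ bX n))
    (n : ℕ) (v : ℕ → KLNode α) (hv : KLInv f A n v) :
    ∃ nd : KLNode α, KLInv f A (n + 1) (Function.update v (n + 1) nd) := by
  classical
  set i₀ := KLpar (n + 1) with hi₀def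
  have hi₀n : i₀ ≤ n := by
    have := KLpar_lt (show 1 ≤ n + 1 by omega)
    omega
  set xP := (v i₀).pt with hxPdef
  set BtP := (v i₀).Bt with hBtPdef
  set W := KLW v n i₀ with hWdef
  set T := f '' (A ∩ BtP) \ f '' (A ∩ W) with hTdef
  have hfp : f xP ∈ closure T := hv.hclosure i₀ hi₀n
  have hfpW : f xP ∈ f '' (A ∩ W) :=
    ⟨xP, ⟨hv.hxA i₀ hi₀n, KLW_sub0 v n i₀ (hv.hxW i₀ hi₀n)⟩, rfl⟩
  have hfpT : f xP ∉ T := fun h => h.2 hfpW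
  have hWclopen : IsClopen W := KLW_clopen v n i₀ (hv.hW0clopen i₀ hi₀n)
    (fun j hj => hv.hBtclopen j hj)
  set K := ((1:ℝ)/2) ^ (KLkk (n + 1)) with hKdef
  have hK0 : (0:ℝ) < K := by rw [hKdef]; positivity
  -- choose a small radius r
  have hrex : ∃ r : ℝ, 0 < r ∧ r ≤ K / 2 ∧
      ∀ i ≤ n, i ≠ i₀ → 2 * r ≤ dist (f (v i).pt) (f xP) := by
    set s := (Finset.range (n + 1)).filter (fun i => i ≠ i₀) with hsdef
    by_cases hs : s.Nonempty
    · set m := s.inf' hs (fun i => dist (f (v i).pt) (f xP)) with hm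
      have hmpos : 0 < m := by
        rw [hm, Finset.lt_inf'_iff]
        intro i hi
        rw [hsdef, Finset.mem_filter, Finset.mem_range] at hi
        exact dist_pos.mpr (hv.hinj i (by omega) i₀ hi₀n hi.2)
      refine ⟨min (m / 2) (K / 2), lt_min (by linarith) (by linarith), min_le_right _ _, ?_⟩
      intro i hi hne
      have hle : m ≤ dist (f (v i).pt) (f xP) := by
        apply Finset.inf'_le
        rw [hsdef, Finset.mem_filter, Finset.mem_range]
        exact ⟨by omega, hne⟩
      have : min (m / 2) (K / 2) ≤ m / 2 := min_le_left _ _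
      linarith
    · refine ⟨K / 2, by linarith, le_refl _, ?_⟩
      intro i hi hne
      exfalso
      apply hs
      refine ⟨i, ?_⟩
      rw [hsdef, Finset.mem_filter, Finset.mem_range]
      exact ⟨by omega, hne⟩
  obtain ⟨r, hr0, hrK, hrmin⟩ := hrex
  -- choose the value y
  obtain ⟨y, hyT, hdy⟩ := Metric.mem_closure_iff.mp hfp r hr0
  have hyne : y ≠ f xP := fun h => hfpT (h ▸ hyT)
  set δ := dist (f xP) y / 3 with hδdef
  have hdP0 : 0 < dist (f xP) y := dist_pos.mpr (fun h => hyne h.symm)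
  have hδ0 : 0 < δ := by rw [hδdef]; linarith
  have hd3 : dist (f xP) y = 3 * δ := by rw [hδdef]; ring
  have hδr : 3 * δ < r := by rw [← hd3]; exact hdy
  -- preimage of y
  obtain ⟨x', ⟨hx'A, hx'Bt⟩, hfx'⟩ := hyT.1
  have hx'W : x' ∉ W := fun hw => hyT.2 ⟨x', ⟨hx'A, hw⟩, hfx'⟩
  -- the new box
  set O := (BtP ∩ Wᶜ) ∩ f ⁻¹' (Metric.ball y δ) with hOdef
  have hOopen : IsOpen O :=
    ((hv.hBtclopen i₀ hi₀n).2.inter hWclopen.1.isOpen_compl).inter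
      (Metric.isOpen_ball.preimage hf)
  have hx'O : x' ∈ O := by
    refine ⟨⟨hx'Bt, hx'W⟩, ?_⟩
    show f x' ∈ Metric.ball y δ
    rw [Metric.mem_ball, hfx']
    simpa using hδ0
  obtain ⟨m₁, hx'B, hBO⟩ := hbb O x' hOopen hx'O
  set B := bX m₁ with hBdef
  have hBsub : B ⊆ BtP := fun z hz => ((hBO hz).1).1
  have hBW : ∀ z ∈ B, z ∉ W := fun z hz => ((hBO hz).1).2
  have hBball : ∀ z ∈ B, dist (f z) y < δ := by
    intro z hz
    have := (hBO hz).2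
    rwa [mem_preimage, Metric.mem_ball] at this
  -- bad point of the new box
  have hne : (A ∩ B).Nonempty := ⟨x', hx'A, hx'B⟩
  obtain ⟨U, hU, xb, hxbU, hxbcl⟩ := exists_bad_point (hfix m₁ hne)
  obtain ⟨m₂, hxbm₂, hm₂U⟩ := hbb U xb hU hxbU.1
  set nd : KLNode α := ⟨xb, B, B ∩ bX m₂, KLcc (n + 1)⟩ with hnddef
  set v' := Function.update v (n + 1) nd with hv'def
  have hv'old : ∀ j, j ≤ n → v' j = v j := by
    intro j hj
    rw [hv'def, Function.update_of_ne (by omega)]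
  have hv'new : v' (n + 1) = nd := by rw [hv'def, Function.update_self]
  have hxbA : xb ∈ A := hxbU.2.1
  have hxbB : xb ∈ B := hxbU.2.2
  have hfxb : dist (f xb) y < δ := hBball xb hxbB
  -- numeric facts
  have hF1 : ∀ i ≤ n, δ < dist (f (v i).pt) y := by
    intro i hi
    by_cases hii : i = i₀
    · rw [hii]
      show δ < dist (f xP) y
      rw [hd3]; linarith
    · have h1 : 2 * r ≤ dist (f (v i).pt) (f xP) := hrmin i hi hii
      have h2 := dist_triangle (f (v i).pt) y (f xP)
      have h3 : dist y (f xP) = 3 * δ := by rw [dist_comm, hd3]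
      linarith
  have hfresh : ∀ i ≤ n, f xb ≠ f (v i).pt := by
    intro i hi heq
    have h1 := hF1 i hi
    rw [← heq] at h1
    linarith
  have hobl : dist (f xb) (f xP) < K := by
    have t := dist_triangle (f xb) y (f xP)
    have h3 : dist y (f xP) = 3 * δ := by rw [dist_comm, hd3]
    linarith
  -- disjointness facts for the new box
  have hBdisjW0 : ∀ i ≤ n, ∀ z ∈ B, z ∉ (v i).W0 := by
    intro i hi z hzB hzW0
    rcases lt_trichotomy i i₀ with h | h | h
    · have h4 := hv.hA4 i i₀ hi₀n h
      exact eq_empty_iff_forall_notMem.mp h4 z ⟨hBsub hzB, hzW0⟩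
    · exact hBW z hzB (KLW_sub0 v n i₀ (h ▸ hzW0))
    · rcases hv.hA5 i₀ i hi h with h5 | h5
      · exact eq_empty_iff_forall_notMem.mp h5 z ⟨hv.hW0sub i hi hzW0, hBsub hzB⟩
      · exact hBW z hzB (h5 (hv.hW0sub i hi hzW0))
  have hBorBt : ∀ i ≤ n, i ≠ i₀ → (B ∩ (v i).Bt = ∅ ∨ B ⊆ KLW v n i) := by
    intro i hi hii
    rcases lt_trichotomy i i₀ with h | h | h
    · rcases hv.hA5 i i₀ hi₀n h with h5 | h5
      · left
        apply eq_empty_iff_forall_notMem.mpr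
        rintro z ⟨hz1, hz2⟩
        exact eq_empty_iff_forall_notMem.mp h5 z ⟨hBsub hz1, hz2⟩
      · right
        exact fun z hz => h5 (hBsub hz)
    · exact absurd h hii
    · rcases hv.hA5 i₀ i hi h with h5 | h5
      · left
        apply eq_empty_iff_forall_notMem.mpr
        rintro z ⟨hz1, hz2⟩
        exact eq_empty_iff_forall_notMem.mp h5 z ⟨hz2, hBsub hz1⟩
      · left
        apply eq_empty_iff_forall_notMem.mpr
        rintro z ⟨hz1, hz2⟩
        exact hBW z hz1 (h5 hz2)
  -- evolution of the W-zones
  have hKWi₀ : KLW v' (n + 1) i₀ = W ∪ B := by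
    rw [hv'def, KLW_update v n nd hi₀n, if_pos rfl]
  have hKWother : ∀ i ≤ n, i ≠ i₀ → KLW v' (n + 1) i = KLW v n i := by
    intro i hi hii
    rw [hv'def, KLW_update v n nd hi, if_neg (fun h => hii h.symm)]
  have hKWmono : ∀ i ≤ n, KLW v n i ⊆ KLW v' (n + 1) i := by
    intro i hi
    by_cases hii : i = i₀
    · subst hii; rw [hKWi₀]; exact subset_union_left
    · rw [hKWother i hi hii]
  have hKWnew : KLW v' (n + 1) (n + 1) = B ∩ bX m₂ := by
    have := KLW_new v' n
    rw [hv'new] at this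
    exact this
  refine ⟨nd, ?_⟩
  rw [← hv'def]
  refine ⟨?_, ?_, ?_, ?_, ?_, ?_, ?_, ?_, ?_, ?_, ?_, ?_⟩
  -- hxA
  · intro i hi
    rcases Nat.lt_or_ge i (n + 1) with h | h
    · rw [hv'old i (by omega)]; exact hv.hxA i (by omega)
    · have : i = n + 1 := by omega
      subst this; rw [hv'new]; exact hxbA
  -- hxW
  · intro i hi
    rcases Nat.lt_or_ge i (n + 1) with h | h
    · rw [hv'old i (by omega)]; exact hv.hxW i (by omega)
    · have : i = n + 1 := by omega
      subst this; rw [hv'new]; exact ⟨hxbB, hxbm₂⟩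
  -- hW0sub
  · intro i hi
    rcases Nat.lt_or_ge i (n + 1) with h | h
    · rw [hv'old i (by omega)]; exact hv.hW0sub i (by omega)
    · have : i = n + 1 := by omega
      subst this; rw [hv'new]; exact inter_subset_left
  -- hBtclopen
  · intro i hi
    rcases Nat.lt_or_ge i (n + 1) with h | h
    · rw [hv'old i (by omega)]; exact hv.hBtclopen i (by omega)
    · have : i = n + 1 := by omega
      subst this; rw [hv'new]; exact hbc m₁
  -- hW0clopen
  · intro i hi
    rcases Nat.lt_or_ge i (n + 1) with h | h
    · rw [hv'old i (by omega)]; exact hv.hW0clopen i (by omega)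
    · have : i = n + 1 := by omega
      subst this; rw [hv'new]; exact (hbc m₁).inter (hbc m₂)
  -- hclosure
  · intro i hi
    rcases Nat.lt_or_ge i (n + 1) with h | h
    · have hin : i ≤ n := by omega
      by_cases hii : i = i₀
      · rw [hii, hv'old i₀ hi₀n, hKWi₀]
        rw [Metric.mem_closure_iff]
        intro ε hε
        obtain ⟨w, hwT, hw⟩ := Metric.mem_closure_iff.mp hfp (min ε δ)
          (lt_min hε hδ0)
        refine ⟨w, ⟨hwT.1, ?_⟩, lt_of_lt_of_le hw (min_le_left _ _)⟩
        rintro ⟨z, ⟨hzA, hzWB⟩, rfl⟩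
        rcases hzWB with hz | hz
        · exact hwT.2 ⟨z, ⟨hzA, hz⟩, rfl⟩
        · have hb := hBball z hz
          have ht := dist_triangle (f xP) (f z) y
          have hwd : dist (f xP) (f z) < δ := lt_of_lt_of_le hw (min_le_right _ _)
          rw [hd3] at ht
          linarith
      · rw [hv'old i hin, hKWother i hin hii]
        exact hv.hclosure i hin
    · have : i = n + 1 := by omega
      subst this
      rw [hv'new, hKWnew]
      show f xb ∈ closure (f '' (A ∩ B) \ f '' (A ∩ (B ∩ bX m₂)))
      apply closure_mono ?_ hxbcl
      intro z hz
      refine ⟨hz.1, fun hmem => hz.2 ?_⟩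
      obtain ⟨w, ⟨hwA, hw1, hw2⟩, hfw⟩ := hmem
      exact ⟨w, ⟨hm₂U hw2, hwA, hw1⟩, hfw⟩
  -- hinj
  · intro i hi j hj hij
    rcases Nat.lt_or_ge i (n + 1) with h1 | h1 <;> rcases Nat.lt_or_ge j (n + 1) with h2 | h2
    · rw [hv'old i (by omega), hv'old j (by omega)]
      exact hv.hinj i (by omega) j (by omega) hij
    · have : j = n + 1 := by omega
      subst this
      rw [hv'old i (by omega), hv'new]
      exact (hfresh i (by omega)).symm
    · have : i = n + 1 := by omega
      subst this
      rw [hv'old j (by omega), hv'new]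
      exact hfresh j (by omega)
    · omega
  -- hA4
  · intro i j hj hij
    rcases Nat.lt_or_ge j (n + 1) with h | h
    · rw [hv'old i (by omega), hv'old j (by omega)]
      exact hv.hA4 i j (by omega) hij
    · have : j = n + 1 := by omega
      subst this
      rw [hv'old i (by omega), hv'new]
      apply eq_empty_iff_forall_notMem.mpr
      rintro z ⟨hz1, hz2⟩
      exact hBdisjW0 i (by omega) z hz1 hz2
  -- hA5
  · intro i j hj hij
    rcases Nat.lt_or_ge j (n + 1) with h | h
    · have hjn : j ≤ n := by omega
      have hin : i ≤ n := by omega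
      rw [hv'old i hin, hv'old j hjn]
      rcases hv.hA5 i j hjn hij with h5 | h5
      · exact Or.inl h5
      · exact Or.inr (h5.trans (hKWmono i hin))
    · have : j = n + 1 := by omega
      subst this
      have hin : i ≤ n := by omega
      rw [hv'old i hin, hv'new]
      by_cases hii : i = i₀
      · subst hii
        right
        rw [hKWi₀]
        exact subset_union_right
      · rcases hBorBt i hin hii with h5 | h5
        · exact Or.inl h5
        · right
          rw [hKWother i hin hii]
          exact h5
  -- hA8
  · intro i hi j hj hij
    rcases Nat.lt_or_ge i (n + 1) with h1 | h1 <;> rcases Nat.lt_or_ge j (n + 1) with h2 | h2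
    · rw [hv'old i (by omega), hv'old j (by omega)]
      exact hv.hA8 i (by omega) j (by omega) hij
    · have : j = n + 1 := by omega
      subst this
      rw [hv'old i (by omega), hv'new]
      exact hBdisjW0 i (by omega) xb hxbB
    · have : i = n + 1 := by omega
      subst this
      rw [hv'old j (by omega), hv'new]
      intro hmem
      exact hBdisjW0 j (by omega) (v j).pt hmem.1 (hv.hxW j (by omega))
    · omega
  -- hdist
  · intro j hj1 hj2
    rcases Nat.lt_or_ge j (n + 1) with h | h
    · have hjn : j ≤ n := by omega
      have hpj : KLpar j ≤ n := by
        have := KLpar_lt hj1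
        omega
      rw [hv'old j hjn, hv'old (KLpar j) hpj]
      exact hv.hdist j hj1 hjn
    · have : j = n + 1 := by omega
      subst this
      rw [hv'new, hv'old (KLpar (n + 1)) hi₀n]
      exact hobl
  -- hcol
  · intro j hj1 hj2
    rcases Nat.lt_or_ge j (n + 1) with h | h
    · rw [hv'old j (by omega)]
      exact hv.hcol j hj1 (by omega)
    · have : j = n + 1 := by omega
      subst this
      rw [hv'new]

end Construction3

section Construction4

set_option linter.unusedSectionVars false

variable {α β : Type*} [TopologicalSpace α] [MetricSpace β]
variable (f : α → β) (A : Set α) (bX : ℕ → Set α)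

lemma KLmain (hf : Continuous f) (hbc : ∀ n, IsClopen (bX n))
    (hbb : ∀ (O : Set α) (x : α), IsOpen O → x ∈ O → ∃ n, x ∈ bX n ∧ bX n ⊆ O)
    (hfix : ∀ n, (A ∩ bX n).Nonempty → ¬ OpenOntoImage f (A ∩ bX n))
    (hA : A.Nonempty) :
    ∃ D : Set α, IsDiscreteSubset D ∧ ¬ Resolvable (f '' D) := by
  classical
  obtain ⟨v0, hv0⟩ := KLroot f A bX hbc hbb hfix hA
  have hstep : ∀ n (v : ℕ → KLNode α), KLInv f A n v →
      ∃ v', KLInv f A (n + 1) v' ∧ ∀ j ≤ n, v' j = v j := by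
    intro n v hv
    obtain ⟨nd, hnd⟩ := KLstep f A bX hf hbc hbb hfix n v hv
    exact ⟨_, hnd, fun j hj => Function.update_of_ne (by omega) _ _⟩
  choose step hstep1 hstep2 using hstep
  let ch : ∀ n : ℕ, {v : ℕ → KLNode α // KLInv f A n v} := fun n =>
    Nat.rec ⟨v0, hv0⟩ (fun m p => ⟨step m p.1 p.2, hstep1 m p.1 p.2⟩) n
  have chsucc : ∀ n, (ch (n + 1)).1 = step n (ch n).1 (ch n).2 := fun n => rfl
  set g : ℕ → KLNode α := fun i => (ch i).1 i with hgdef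
  have agree : ∀ n i, i ≤ n → (ch n).1 i = g i := by
    intro n
    induction n with
    | zero =>
      intro i hi
      have : i = 0 := by omega
      subst this; rfl
    | succ m ih =>
      intro i hi
      rcases Nat.lt_or_ge i (m + 1) with h | h
      · rw [chsucc m, hstep2 m (ch m).1 (ch m).2 i (by omega)]
        exact ih i (by omega)
      · have : i = m + 1 := by omega
        subst this; rfl
  -- global facts about the limit sequence g
  have G2 : ∀ i j, i ≠ j → f (g i).pt ≠ f (g j).pt := by
    intro i j hij
    have h := (ch (max i j)).2.hinj i (le_max_left i j) j (le_max_right i j) hij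
    rwa [agree (max i j) i (le_max_left i j), agree (max i j) j (le_max_right i j)] at h
  have G3o : ∀ i, IsOpen (g i).W0 := by
    intro i
    have h := (ch i).2.hW0clopen i (le_refl i)
    rw [agree i i (le_refl i)] at h
    exact h.2
  have G3m : ∀ i, (g i).pt ∈ (g i).W0 := by
    intro i
    have h := (ch i).2.hxW i (le_refl i)
    rwa [agree i i (le_refl i)] at h
  have G4 : ∀ i j, i ≠ j → (g j).pt ∉ (g i).W0 := by
    intro i j hij
    have h := (ch (max i j)).2.hA8 i (le_max_left i j) j (le_max_right i j) hij
    rwa [agree (max i j) i (le_max_left i j), agree (max i j) j (le_max_right i j)] at h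
  have G5 : ∀ j, 1 ≤ j → dist (f (g j).pt) (f (g (KLpar j)).pt) < (1/2 : ℝ) ^ (KLkk j) := by
    intro j hj
    have hp : KLpar j ≤ j := le_of_lt (KLpar_lt hj)
    have h := (ch j).2.hdist j hj (le_refl j)
    rwa [agree j j (le_refl j), agree j (KLpar j) hp] at h
  have G6 : ∀ j, 1 ≤ j → (g j).col = KLcc j := by
    intro j hj
    have h := (ch j).2.hcol j hj (le_refl j)
    rwa [agree j j (le_refl j)] at h
  -- The discrete set and the two colors
  set Ec : Bool → Set β := fun c => (fun i => f (g i).pt) '' {i | (g i).col = c} with hEcdef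
  set R : Set β := range (fun i => f (g i).pt) with hRdef
  set D : Set α := (fun i => (g i).pt) '' {i | (g i).col = true} with hDdef
  have hEcR : ∀ c, Ec c ⊆ R := by
    rintro c y ⟨i, _, rfl⟩
    exact ⟨i, rfl⟩
  have hdense : ∀ i (c : Bool), f (g i).pt ∈ closure (Ec c) := by
    intro i c
    rw [Metric.mem_closure_iff]
    intro ε hε
    obtain ⟨k, hk⟩ := exists_pow_lt_of_lt_one hε (by norm_num : (1/2 : ℝ) < 1)
    obtain ⟨j, hj1, hjp, hjk, hjc⟩ := KLsched_surj i k c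
    refine ⟨f (g j).pt, ⟨j, ?_, rfl⟩, ?_⟩
    · show (g j).col = c
      rw [G6 j hj1, hjc]
    · have h := G5 j hj1
      rw [hjp, hjk] at h
      rw [dist_comm]
      exact lt_trans h hk
  have hRc : ∀ c, R ⊆ closure (Ec c) := by
    rintro c y ⟨i, rfl⟩
    exact hdense i c
  have hdisj : ∀ y, y ∈ Ec false → y ∉ Ec true := by
    rintro y ⟨i, hci, rfl⟩ ⟨j, hcj, hji⟩
    by_cases h : i = j
    · subst h
      simp only [Set.mem_setOf_eq] at hci hcj
      rw [hci] at hcj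
      exact Bool.false_ne_true hcj
    · exact G2 j i (fun hh => h hh.symm) hji
  -- discreteness
  have hDdisc : IsDiscreteSubset D := by
    rintro x ⟨i, hic, rfl⟩
    refine ⟨(g i).W0, G3o i, ?_⟩
    apply Set.eq_singleton_iff_unique_mem.mpr
    refine ⟨⟨G3m i, ⟨i, hic, rfl⟩⟩, ?_⟩
    rintro z ⟨hzW, j, hjc, rfl⟩
    by_cases h : j = i
    · subst h; rfl
    · exact absurd hzW (G4 i j (fun hh => h hh.symm))
  -- the image of D
  have hfD : f '' D = Ec true := by
    rw [hDdef, hEcdef, Set.image_image]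
  refine ⟨D, hDdisc, ?_⟩
  intro hres
  have hF := hres (closure R) isClosed_closure
    ⟨f (g 0).pt, subset_closure ⟨0, rfl⟩⟩
  apply hF
  rw [hfD]
  apply Set.Subset.antisymm
  · intro z hz
    have := hz.1
    have h2 : closure (closure R ∩ Ec true) ⊆ closure R :=
      closure_minimal (inter_subset_left) isClosed_closure
    exact h2 this
  · intro z hz
    constructor
    · have h1 : Ec true ⊆ closure R ∩ Ec true := by
        intro w hw
        exact ⟨subset_closure (hEcR true hw), hw⟩
      have h2 : closure R ⊆ closure (Ec true) :=
        closure_minimal (hRc true) isClosed_closure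
      exact (h2.trans (closure_mono h1)) hz
    · have h1 : Ec false ⊆ closure R \ Ec true := by
        intro w hw
        exact ⟨subset_closure (hEcR false hw), hdisj w hw⟩
      have h2 : closure R ⊆ closure (Ec false) :=
        closure_minimal (hRc false) isClosed_closure
      exact (h2.trans (closure_mono h1)) hz

end Construction4

section KeyLemma

lemma key_lemma {α β : Type*} [TopologicalSpace α] [TopologicalSpace β]
    [TopologicalSpace.MetrizableSpace β]
    (f : α → β) (hf : Continuous f)
    (bX : ℕ → Set α) (hbc : ∀ n, IsClopen (bX n))
    (hbb : ∀ (O : Set α) (x : α), IsOpen O → x ∈ O → ∃ n, x ∈ bX n ∧ bX n ⊆ O)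
    (A : Set α) (hA : A.Nonempty)
    (hfix : ∀ n, (A ∩ bX n).Nonempty → ¬ OpenOntoImage f (A ∩ bX n)) :
    ∃ D : Set α, IsDiscreteSubset D ∧ ¬ Resolvable (f '' D) := by
  letI : MetricSpace β := TopologicalSpace.metrizableSpaceMetric β
  exact KLmain f A bX hf hbc hbb hfix hA

end KeyLemma

theorem discrete_resolvable_implies_piecewise_open
    (X Y : Set Cantor) (f : X → Y) (hf : Continuous f)
    (hres : ∀ D : Set X, IsDiscreteSubset D → Resolvable (f '' D)) :
    ∃ C : ℕ → Set X,
      (∀ n, IsClosed (C n)) ∧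
      Pairwise (Function.onFun Disjoint C) ∧
      (⋃ n, C n) = univ ∧
      ∀ n, OpenOntoImage f (C n) := by
  classical
  obtain ⟨bX, hbclopen, hbbasis⟩ := cantor_subtype_basis X
  apply partition_of_kernel_empty bX hbclopen f
  intro A hAcl hAne hAfix
  obtain ⟨D, hD, hnres⟩ := key_lemma f hf bX hbclopen hbbasis A hAne hAfix
  exact hnres (hres D hD)
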